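/- Let p₀, p₁ ∈ [0,1] with p₀ ≤ p₁, and let C be a finite multiset of nonnegative reals. Set S = ∑_{p∈C} p and SS = ∑_{p∈C} p². Define f on finite multisets of nonnegative reals with positive sum by f(M) = (∑_{p∈M} p) − (∑_{p∈M} p²)/(∑_{p∈M} p). If S + p₀ > 0 and S + p₁ > 0, then f({p₀} ∪ C) − f({p₁} ∪ C) = −(p₁ − p₀)(SS + S²)/((S+p₀)(S+p₁)) ≤ 0. In particular, among remaining-edge sets differing in one element, keeping the smaller probability yields the smaller (better) objective value. -/
import Mathlib


/-- The single-node objective on a multiset of remaining edge probabilities. -/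
noncomputable def edgeObj (M : Multiset ℝ) : ℝ :=
  M.sum - (M.map (fun p => p ^ 2)).sum / M.sum

theorem exchange_lemma (p₀ p₁ : ℝ) (hp₀ : 0 ≤ p₀) (hp₁ : p₁ ≤ 1) (h01 : p₀ ≤ p₁)
    (hp₀1 : p₀ ≤ 1) (hp₁0 : 0 ≤ p₁)
    (C : Multiset ℝ) (hC : ∀ p ∈ C, 0 ≤ p)
    (hS0 : 0 < C.sum + p₀) (hS1 : 0 < C.sum + p₁) :
    edgeObj (p₀ ::ₘ C) - edgeObj (p₁ ::ₘ C)
        = -(p₁ - p₀) * ((C.map (fun p => p ^ 2)).sum + C.sum ^ 2) /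
            ((C.sum + p₀) * (C.sum + p₁)) ∧
      edgeObj (p₀ ::ₘ C) - edgeObj (p₁ ::ₘ C) ≤ 0 := by
  set S := C.sum with hS
  set SS := (C.map (fun p => p ^ 2)).sum with hSS
  have hSSnn : 0 ≤ SS := Multiset.sum_nonneg (by
    intro x hx
    obtain ⟨p, hp, rfl⟩ := Multiset.mem_map.mp hx
    positivity)
  have hSnn : 0 ≤ S := Multiset.sum_nonneg hC
  have he : edgeObj (p₀ ::ₘ C) - edgeObj (p₁ ::ₘ C)
      = -(p₁ - p₀) * (SS + S ^ 2) / ((S + p₀) * (S + p₁)) := by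
    simp only [edgeObj, Multiset.map_cons, Multiset.sum_cons, ← hS, ← hSS]
    rw [add_comm p₀ S, add_comm p₁ S]
    field_simp
    ring
  refine ⟨he, ?_⟩
  rw [he]
  apply div_nonpos_of_nonpos_of_nonneg
  · nlinarith
  · positivity
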